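/- Let K be a field of characteristic different from 2, let a, b, d, a′, b′, d′ be nonzero elements of K, and let c ∈ K be nonzero. If the diagonal quadratic form ⟨1, −a, −b, a·b·d⟩ (i.e., x² − a·y² − b·z² + a·b·d·w²) is equivalent (isometric) to the scaled diagonal quadratic form c·⟨1, −a′, −b′, a′·b′·d′⟩, then d and d′ differ by a square: there exists e ∈ K, e ≠ 0, with d′ = d·e². (In other words, the class of d in K*/K*², the discriminant of the quadric surface defined by the form, does not depend on the choice of the diagonal form defining the quadric.) -/

import Mathlib

open QuadraticMap

lemma toMatrix'_weightedSumSquares (K : Type*) [Field K] [Invertible (2 : K)]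
    {n : ℕ} (w : Fin n → K) :
    QuadraticForm.toMatrix' (weightedSumSquares K w) = Matrix.diagonal w := by
  ext i j
  rw [QuadraticForm.toMatrix', LinearMap.toMatrix₂'_apply, QuadraticMap.associated_apply,
    invOf_smul_eq_iff, two_smul]
  simp only [weightedSumSquares_apply, smul_eq_mul, Pi.add_apply, Pi.single_apply]
  rcases eq_or_ne i j with rfl | hij
  · rw [Matrix.diagonal_apply_eq,
      Finset.sum_eq_single i (fun x _ hx => by simp [hx]) (by simp),
      Finset.sum_eq_single i (fun x _ hx => by simp [hx]) (by simp)]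
    simp
    ring
  · rw [Matrix.diagonal_apply_ne _ hij]
    have key : ∀ x : Fin n,
        w x * (((if x = i then (1:K) else 0) + if x = j then 1 else 0) *
          ((if x = i then (1:K) else 0) + if x = j then 1 else 0))
        = w x * (if x = i then (1:K) else 0) + w x * (if x = j then (1:K) else 0) := by
      intro x
      rcases eq_or_ne x i with rfl | hxi <;> rcases eq_or_ne x j with rfl | hxj <;>
        simp_all
    rw [Finset.sum_congr rfl (fun x _ => key x), Finset.sum_add_distrib,
      Finset.sum_eq_single i (fun x _ hx => by simp [hx]) (by simp),
      Finset.sum_eq_single j (fun x _ hx => by simp [hx]) (by simp),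
      Finset.sum_eq_single i (fun x _ hx => by simp [hx]) (by simp),
      Finset.sum_eq_single j (fun x _ hx => by simp [hx]) (by simp)]
    simp

/-- Over a field `K` of characteristic ≠ 2, if the diagonal quadratic form
`⟨1, −a, −b, a·b·d⟩` is equivalent to a scaling `c • ⟨1, −a′, −b′, a′·b′·d′⟩` (with all of
`a, b, d, a′, b′, d′, c` nonzero), then `d` and `d′` differ by a nonzero square, i.e. the
discriminant class of the quadric in `K*/K*²` is well defined. -/
theorem discriminant_well_defined_of_equivalent_diagonal_quadric
    (K : Type*) [Field K] (hchar : ringChar K ≠ 2) (a b d a' b' d' c : K)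
    (ha : a ≠ 0) (hb : b ≠ 0) (hd : d ≠ 0) (ha' : a' ≠ 0) (hb' : b' ≠ 0) (hd' : d' ≠ 0)
    (hc : c ≠ 0)
    (h : (weightedSumSquares K ![1, -a, -b, a * b * d]).Equivalent
      (c • weightedSumSquares K ![1, -a', -b', a' * b' * d'])) :
    ∃ e : K, e ≠ 0 ∧ d' = d * e ^ 2 := by
  have h2 : (2 : K) ≠ 0 := Ring.two_ne_zero hchar
  haveI : Invertible (2 : K) := invertibleOfNonzero h2
  obtain ⟨f⟩ := h
  set Q₂ := c • weightedSumSquares K ![1, -a', -b', a' * b' * d'] with hQ₂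
  have hcomp : Q₂.comp f.toLinearEquiv.toLinearMap = weightedSumSquares K ![1, -a, -b, a * b * d] := by
    ext x
    exact f.map_app x
  have hdiscr := QuadraticForm.discr'_comp (Q := Q₂) f.toLinearEquiv.toLinearMap
  rw [hcomp] at hdiscr
  set m := (LinearMap.toMatrix' f.toLinearEquiv.toLinearMap).det with hm
  have hmne : m ≠ 0 := by
    have : IsUnit (LinearMap.toMatrix' f.toLinearEquiv.toLinearMap).det := by
      rw [LinearMap.det_toMatrix']
      exact LinearEquiv.isUnit_det' f.toLinearEquiv
    exact this.ne_zero
  have hd1 : QuadraticForm.discr' (weightedSumSquares K ![1, -a, -b, a * b * d]) = a^2 * b^2 * d := by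
    rw [QuadraticForm.discr', toMatrix'_weightedSumSquares, Matrix.det_diagonal,
      Fin.prod_univ_four]
    simp only [Matrix.cons_val_zero, Matrix.cons_val_one, Matrix.head_cons,
      Matrix.cons_val_two, Matrix.tail_cons, Matrix.cons_val_three]
    ring
  have hd2 : QuadraticForm.discr' Q₂ = c^4 * (a'^2 * b'^2 * d') := by
    rw [hQ₂, QuadraticForm.discr'_smul, QuadraticForm.discr', toMatrix'_weightedSumSquares,
      Matrix.det_diagonal, Fin.prod_univ_four]
    simp only [Matrix.cons_val_zero, Matrix.cons_val_one, Matrix.head_cons,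
      Matrix.cons_val_two, Matrix.tail_cons, Matrix.cons_val_three, Fintype.card_fin]
    ring
  rw [hd1, hd2] at hdiscr
  refine ⟨a * b / (m * c^2 * a' * b'), ?_, ?_⟩
  · exact div_ne_zero (mul_ne_zero ha hb)
      (mul_ne_zero (mul_ne_zero (mul_ne_zero hmne (pow_ne_zero 2 hc)) ha') hb')
  · have hden : (m * c ^ 2 * a' * b') ^ 2 ≠ 0 := pow_ne_zero _
      (mul_ne_zero (mul_ne_zero (mul_ne_zero hmne (pow_ne_zero 2 hc)) ha') hb')
    rw [div_pow, mul_div_assoc', eq_div_iff hden]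
    linear_combination -hdiscr
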